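/- arXiv:1809.02334 — 3 statements merged into one kernel-verified Lean document; each statement's English description precedes it below -/
import Mathlib

section
/- Let A be an M × r complex matrix, and let S be a set of n row indices (n ≥ r) such that the submatrix Â₀ = A_S has full column rank r, i.e. Â₀ᴴ Â₀ is invertible. Set C₀ = A Â₀⁺ where Â₀⁺ = (Â₀ᴴ Â₀)^{-1} Â₀ᴴ is the Moore–Penrose pseudoinverse of Â₀. Then for every row index i ∉ S, the submatrix Â = A_{S∪{i}} obtained by appending the i-th row of A satisfies det(Âᴴ Â) = det(Â₀ᴴ Â₀) · (1 + ‖(C₀)_{i,:}‖₂²), i.e., the squared volume is multiplied by 1 + l_{0,i} where l_{0,i} = ‖(C₀)_{i,:}‖₂² is the squared Euclidean norm of the i-th row of C₀. -/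
open Matrix BigOperators

/-- The submatrix of `A` consisting of the rows indexed by the finite set `S`. -/
def rowsSub {M r : ℕ} (A : Matrix (Fin M) (Fin r) ℂ) (S : Finset (Fin M)) :
    Matrix {x // x ∈ S} (Fin r) ℂ :=
  A.submatrix (fun x : {x // x ∈ S} => (x : Fin M)) id

/-- `C₀ = A Â₀⁺` where `Â₀ = A_S` and `Â₀⁺ = (Â₀ᴴ Â₀)⁻¹ Â₀ᴴ`. -/
noncomputable def C0 {M r : ℕ} (A : Matrix (Fin M) (Fin r) ℂ) (S : Finset (Fin M)) :
    Matrix (Fin M) {x // x ∈ S} ℂ :=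
  A * (((rowsSub A S)ᴴ * rowsSub A S)⁻¹ * (rowsSub A S)ᴴ)

/-- Determinant of a rank-one update of an invertible matrix. -/
lemma aux_det {r : ℕ} (N : Matrix (Fin r) (Fin r) ℂ) (hinv : IsUnit N.det)
    (a : Fin r → ℂ) :
    (N + replicateCol Unit (star a) * replicateRow Unit a).det = N.det * (1 + a ⬝ᵥ N⁻¹ *ᵥ star a) := by
  rw [Matrix.det_add_replicateCol_mul_replicateRow hinv]
  congr 1
  rw [det_unique]
  simp only [Matrix.add_apply, Matrix.one_apply_eq, mul_apply, replicateRow_apply, replicateCol_apply,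
    dotProduct, mulVec, Pi.star_apply, Finset.mul_sum, Finset.sum_mul]
  congr 1
  rw [Finset.sum_comm]
  exact Finset.sum_congr rfl fun x _ => Finset.sum_congr rfl fun y _ => by ring

/-- Squared norm of the row `a ᵥ* ((Bᴴ B)⁻¹ Bᴴ)` equals `a ⬝ᵥ (Bᴴ B)⁻¹ *ᵥ star a`. -/
lemma aux_norm {r : ℕ} {κ : Type*} [Fintype κ] (B : Matrix κ (Fin r) ℂ)
    (hinv : IsUnit (Bᴴ * B).det) (a : Fin r → ℂ) :
    ((∑ k, ‖(a ᵥ* ((Bᴴ * B)⁻¹ * Bᴴ)) k‖ ^ 2 : ℝ) : ℂ)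
      = a ⬝ᵥ (Bᴴ * B)⁻¹ *ᵥ star a := by
  set N := Bᴴ * B with hN
  have hNH : Nᴴ = N := by rw [hN, conjTranspose_mul, conjTranspose_conjTranspose]
  have hNinvH : N⁻¹ᴴ = N⁻¹ := by rw [conjTranspose_nonsing_inv, hNH]
  set w : κ → ℂ := a ᵥ* (N⁻¹ * Bᴴ) with hw
  have hMM : (N⁻¹ * Bᴴ) * (N⁻¹ * Bᴴ)ᴴ = N⁻¹ := by
    rw [conjTranspose_mul, conjTranspose_conjTranspose, hNinvH]
    calc N⁻¹ * Bᴴ * (B * N⁻¹) = N⁻¹ * (N * N⁻¹) := by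
          rw [hN]; simp only [Matrix.mul_assoc]
      _ = N⁻¹ := by rw [Matrix.mul_nonsing_inv N hinv, Matrix.mul_one]
  have key : ∑ k, w k * star (w k) = a ⬝ᵥ N⁻¹ *ᵥ star a := by
    calc ∑ k, w k * star (w k) = w ⬝ᵥ star w := rfl
      _ = w ⬝ᵥ ((N⁻¹ * Bᴴ)ᴴ *ᵥ star a) := by rw [hw, star_vecMul]
      _ = (w ᵥ* (N⁻¹ * Bᴴ)ᴴ) ⬝ᵥ star a := by rw [dotProduct_mulVec]
      _ = (a ᵥ* ((N⁻¹ * Bᴴ) * (N⁻¹ * Bᴴ)ᴴ)) ⬝ᵥ star a := by rw [hw, vecMul_vecMul]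
      _ = a ⬝ᵥ N⁻¹ *ᵥ star a := by rw [hMM, ← dotProduct_mulVec]
  rw [← key]
  push_cast
  refine Finset.sum_congr rfl fun k _ => ?_
  have h := Complex.mul_conj (w k)
  rw [show w k * star (w k) = ((Complex.normSq (w k) : ℝ) : ℂ) from h]
  rw [← Complex.sq_norm]
  norm_cast

/-- Appending a row `i ∉ S` to the full-column-rank submatrix `Â₀ = A_S` multiplies the
squared volume `det(Âᴴ Â)` by `1 + ‖(C₀)_{i,:}‖₂²`, where `C₀ = A Â₀⁺`. -/
theorem statement6 (M r n : ℕ) (hrn : r ≤ n)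
    (A : Matrix (Fin M) (Fin r) ℂ) (S : Finset (Fin M)) (hS : S.card = n)
    (hinv : IsUnit ((rowsSub A S)ᴴ * rowsSub A S).det) :
    ∀ i ∉ S,
      ((rowsSub A (insert i S))ᴴ * rowsSub A (insert i S)).det
        = ((rowsSub A S)ᴴ * rowsSub A S).det
            * (((1 + ∑ k, ‖C0 A S i k‖ ^ 2 : ℝ) : ℂ)) := by
  intro i hi
  have h1 : (rowsSub A (insert i S))ᴴ * rowsSub A (insert i S)
      = (rowsSub A S)ᴴ * rowsSub A S
        + replicateCol Unit (star fun j => A i j) * replicateRow Unit (fun j => A i j) := by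
    ext j k
    simp only [mul_apply, conjTranspose_apply, rowsSub, submatrix_apply, id_eq,
      Matrix.add_apply, replicateCol_apply, replicateRow_apply]
    rw [Finset.sum_coe_sort (insert i S) (fun x => star (A x j) * A x k),
      Finset.sum_insert hi,
      ← Finset.sum_coe_sort S (fun x => star (A x j) * A x k)]
    simp only [Pi.star_apply, Finset.univ_unique, Finset.sum_singleton]
    ring
  have h2 : ∀ k, C0 A S i k
      = ((fun j => A i j) ᵥ* (((rowsSub A S)ᴴ * rowsSub A S)⁻¹ * (rowsSub A S)ᴴ)) k := by
    intro k
    simp [C0, mul_apply, vecMul, dotProduct]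
  have h3 : ((∑ k, ‖C0 A S i k‖ ^ 2 : ℝ) : ℂ)
      = (fun j => A i j) ⬝ᵥ ((rowsSub A S)ᴴ * rowsSub A S)⁻¹ *ᵥ star (fun j => A i j) := by
    rw [show (∑ k, ‖C0 A S i k‖ ^ 2 : ℝ)
        = ∑ k, ‖((fun j => A i j) ᵥ*
            (((rowsSub A S)ᴴ * rowsSub A S)⁻¹ * (rowsSub A S)ᴴ)) k‖ ^ 2 from
      Finset.sum_congr rfl fun k _ => by rw [h2 k]]
    exact aux_norm (rowsSub A S) hinv _
  rw [h1, aux_det _ hinv, ← h3]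
  push_cast
  ring
end

section
/- Let A be an M × r complex matrix, and let S be a set of n row indices (n ≥ r) such that the submatrix Â₀ = A_S has full column rank r, i.e. Â₀ᴴ Â₀ is invertible. Set C₀ = A Â₀⁺ where Â₀⁺ = (Â₀ᴴ Â₀)^{-1} Â₀ᴴ, and for each row index k let l_{0,k} = ‖(C₀)_{k,:}‖₂². Then for every i ∉ S and every j ∈ S, the submatrix Â' = A_{(S\{j})∪{i}} obtained by replacing the j-th row of Â₀ with the i-th row of A satisfies det((Â')ᴴ Â') = B_{i,j} · det(Â₀ᴴ Â₀), where B_{i,j} = |(C₀)_{i,j'}|² + (1 + l_{0,i})(1 − l_{0,j}) and (C₀)_{i,j'} denotes the entry of C₀ in row i and in the column corresponding to the selected row j of Â₀. -/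
open Matrix BigOperators

/-- The squared Euclidean norm `l_{0,k}` of the `k`-th row of `C₀`. -/
noncomputable def l0 {M r : ℕ} (A : Matrix (Fin M) (Fin r) ℂ) (S : Finset (Fin M))
    (k : Fin M) : ℝ :=
  ∑ t, ‖C0 A S k t‖ ^ 2

/-- Replacing row `j ∈ S` of the full-column-rank submatrix `Â₀ = A_S` by row `i ∉ S`
multiplies the squared volume by `B_{i,j} = |(C₀)_{i,j}|² + (1 + l_{0,i})(1 − l_{0,j})`. -/
theorem statement7 (M r n : ℕ) (hrn : r ≤ n)
    (A : Matrix (Fin M) (Fin r) ℂ) (S : Finset (Fin M)) (hS : S.card = n)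
    (hinv : IsUnit ((rowsSub A S)ᴴ * rowsSub A S).det) :
    ∀ i ∉ S, ∀ j, ∀ hj : j ∈ S,
      ((rowsSub A (insert i (S.erase j)))ᴴ * rowsSub A (insert i (S.erase j))).det
        = (((‖C0 A S i ⟨j, hj⟩‖ ^ 2 + (1 + l0 A S i) * (1 - l0 A S j) : ℝ)) : ℂ)
            * ((rowsSub A S)ᴴ * rowsSub A S).det := by
  intro i hi j hj
  set B := rowsSub A S with hBdef
  set G := Bᴴ * B with hGdef
  have hGG : G * G⁻¹ = 1 := Matrix.mul_nonsing_inv _ hinv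
  have hGG' : G⁻¹ * G = 1 := Matrix.nonsing_inv_mul _ hinv
  have hGH : Gᴴ = G := by
    rw [hGdef, Matrix.conjTranspose_mul, Matrix.conjTranspose_conjTranspose]
  have hGiH : (G⁻¹)ᴴ = G⁻¹ := by
    rw [Matrix.conjTranspose_nonsing_inv, hGH]
  set P := A * G⁻¹ * Aᴴ with hPdef
  have hPH : ∀ a b, P b a = star (P a b) := by
    intro a b
    have : Pᴴ = P := by
      rw [hPdef, Matrix.conjTranspose_mul, Matrix.conjTranspose_mul,
        Matrix.conjTranspose_conjTranspose, hGiH, Matrix.mul_assoc]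
    conv_lhs => rw [← this]
    rfl
  -- Gram expansion
  have hGram : ∀ (T : Finset (Fin M)) (a b : Fin r),
      ((rowsSub A T)ᴴ * rowsSub A T) a b = ∑ k ∈ T, star (A k a) * A k b := by
    intro T a b
    rw [Matrix.mul_apply]
    rw [← Finset.sum_coe_sort T (fun k => star (A k a) * A k b)]
    rfl
  -- C0 entries are entries of P
  have hC0eq : C0 A S = A * (G⁻¹ * Bᴴ) := rfl
  have hC0P : ∀ (k : Fin M) (s : {x // x ∈ S}), C0 A S k s = P k (s : Fin M) := by
    intro k s
    rw [hC0eq, hPdef]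
    simp only [Matrix.mul_apply, Matrix.conjTranspose_apply, hBdef, rowsSub,
      Matrix.submatrix_apply, id_eq, Finset.mul_sum, Finset.sum_mul]
    rw [Finset.sum_comm]
    exact Finset.sum_congr rfl fun u _ => Finset.sum_congr rfl fun t _ => by ring
  -- l0 is the diagonal of P
  have hCC : C0 A S * (C0 A S)ᴴ = P := by
    rw [hC0eq, ← Matrix.mul_assoc, hPdef]
    rw [Matrix.conjTranspose_mul, Matrix.conjTranspose_mul, Matrix.conjTranspose_conjTranspose,
      hGiH]
    calc A * G⁻¹ * Bᴴ * (B * (G⁻¹ * Aᴴ))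
        = A * G⁻¹ * (Bᴴ * B) * (G⁻¹ * Aᴴ) := by
          simp only [Matrix.mul_assoc]
      _ = A * (G⁻¹ * G) * (G⁻¹ * Aᴴ) := by rw [← hGdef, Matrix.mul_assoc A]
      _ = A * G⁻¹ * Aᴴ := by rw [hGG', Matrix.mul_one, Matrix.mul_assoc]
  have hl0 : ∀ k : Fin M, (l0 A S k : ℂ) = P k k := by
    intro k
    have h1 : (C0 A S * (C0 A S)ᴴ) k k = (l0 A S k : ℂ) := by
      rw [Matrix.mul_apply, l0]
      push_cast
      refine Finset.sum_congr rfl fun t _ => ?_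
      rw [Matrix.conjTranspose_apply,
        show star (C0 A S k t) = (starRingEnd ℂ) (C0 A S k t) from rfl,
        Complex.mul_conj, ← Complex.sq_norm, Complex.ofReal_pow]
    rw [← h1, hCC]
  -- setup rank-2 update matrices
  have hiS' : i ∉ S.erase j := fun h => hi (Finset.mem_of_mem_erase h)
  set X : Matrix (Fin r) (Fin 2) ℂ := fun a t => if t = 0 then star (A i a) else star (A j a)
    with hXdef
  set Y : Matrix (Fin 2) (Fin r) ℂ := fun t b => if t = 0 then A i b else -A j b with hYdef
  have hXY : (rowsSub A (insert i (S.erase j)))ᴴ * rowsSub A (insert i (S.erase j))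
      = G + X * Y := by
    ext a b
    rw [Matrix.add_apply, hGram, Finset.sum_insert hiS', Finset.sum_erase_eq_sub hj,
      hGdef, hBdef, hGram, Matrix.mul_apply, Fin.sum_univ_two]
    simp only [hXdef, hYdef]
    norm_num
    ring
  -- the 2x2 block
  have hent : ∀ (k l : Fin M), (∑ b, A k b * ∑ a, G⁻¹ b a * star (A l a)) = P k l := by
    intro k l
    rw [hPdef]
    simp only [Matrix.mul_apply, Matrix.conjTranspose_apply, Finset.mul_sum, Finset.sum_mul]
    rw [Finset.sum_comm]
    exact Finset.sum_congr rfl fun u _ => Finset.sum_congr rfl fun t _ => by ring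
  have h00 : (Y * (G⁻¹ * X)) 0 0 = P i i := by
    rw [← hent i i, Matrix.mul_apply]; simp only [Matrix.mul_apply]; simp only [hXdef, hYdef]; norm_num
  have h01 : (Y * (G⁻¹ * X)) 0 1 = P i j := by
    rw [← hent i j, Matrix.mul_apply]; simp only [Matrix.mul_apply]; simp only [hXdef, hYdef]; norm_num
  have h10 : (Y * (G⁻¹ * X)) 1 0 = -(P j i) := by
    rw [← hent j i, Matrix.mul_apply]; simp only [Matrix.mul_apply]; simp only [hXdef, hYdef]; norm_num
  have h11 : (Y * (G⁻¹ * X)) 1 1 = -(P j j) := by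
    rw [← hent j j, Matrix.mul_apply]; simp only [Matrix.mul_apply]; simp only [hXdef, hYdef]; norm_num
  -- determinant computation
  have hdet2 : ((1 : Matrix (Fin 2) (Fin 2) ℂ) + Y * (G⁻¹ * X)).det
      = (1 + P i i) * (1 - P j j) + P i j * P j i := by
    rw [Matrix.det_fin_two]
    simp only [Matrix.add_apply, Matrix.one_apply_eq, Matrix.one_apply_ne (by norm_num : (0:Fin 2) ≠ 1),
      Matrix.one_apply_ne (by norm_num : (1:Fin 2) ≠ 0), h00, h01, h10, h11]
    ring
  have hsplit : G + X * Y = G * (1 + G⁻¹ * X * Y) := by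
    rw [Matrix.mul_add, Matrix.mul_one, ← Matrix.mul_assoc, ← Matrix.mul_assoc, hGG,
      Matrix.one_mul]
  have hmain : ((rowsSub A (insert i (S.erase j)))ᴴ * rowsSub A (insert i (S.erase j))).det
      = ((1 + P i i) * (1 - P j j) + P i j * P j i) * G.det := by
    rw [hXY, hsplit, Matrix.det_mul, Matrix.det_one_add_mul_comm (G⁻¹ * X) Y,
      hdet2, mul_comm]
  rw [hmain]
  congr 1
  rw [hPH i j, ← hC0P i ⟨j, hj⟩, ← hl0 i, ← hl0 j,
    show C0 A S i ⟨j, hj⟩ * star (C0 A S i ⟨j, hj⟩)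
        = ((‖C0 A S i ⟨j, hj⟩‖ ^ 2 : ℝ) : ℂ) by
      rw [show star (C0 A S i ⟨j, hj⟩) = (starRingEnd ℂ) (C0 A S i ⟨j, hj⟩) from rfl,
        Complex.mul_conj, ← Complex.sq_norm, Complex.ofReal_pow]]
  push_cast
  ring
end

section
/- Let R be an r × N complex matrix of full row rank r (R Rᴴ invertible), and let r ≤ n ≤ N. Let S be a set of n column indices such that the r × n submatrix Â = R_{:,S} has nonzero volume (det(Â Âᴴ) ≠ 0) and has locally maximal volume with respect to single-column exchanges: for every j ∈ S and every i ∉ S, det(R_{:,(S\{j})∪{i}} (R_{:,(S\{j})∪{i}})ᴴ) ≤ det(Â Âᴴ). Then for every vector x ∈ ℂ^N, ‖Â⁺ (R x)‖₂² ≤ (1 + r(N−n)/(n−r+1)) · ‖x‖₂², where Â⁺ = Âᴴ(Â Âᴴ)^{-1} is the Moore–Penrose pseudoinverse of Â; equivalently, ‖Â⁺ R‖₂ ≤ √(1 + r(N−n)/(n−r+1)). -/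
open Matrix BigOperators

/-- The submatrix of `R` consisting of the columns indexed by the finite set `S`. -/
def colsSub {r N : ℕ} (R : Matrix (Fin r) (Fin N) ℂ) (S : Finset (Fin N)) :
    Matrix (Fin r) {x // x ∈ S} ℂ :=
  R.submatrix id (fun x : {x // x ∈ S} => (x : Fin N))

/-- The squared volume `det(B Bᴴ)` (a nonnegative real) of the column submatrix `R_{:,S}`. -/
noncomputable def sqVol {r N : ℕ} (R : Matrix (Fin r) (Fin N) ℂ) (S : Finset (Fin N)) : ℝ :=
  ((colsSub R S * (colsSub R S)ᴴ).det).re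

noncomputable def qf {r' : ℕ} (G : Matrix (Fin r') (Fin r') ℂ) (u v : Fin r' → ℂ) : ℂ :=
  star u ⬝ᵥ (G⁻¹ *ᵥ v)

lemma qf_add_right {r' : ℕ} (G : Matrix (Fin r') (Fin r') ℂ) (u v w : Fin r' → ℂ) :
    qf G u (v + w) = qf G u v + qf G u w := by
  simp [qf, Matrix.mulVec_add, dotProduct_add]

lemma qf_sub_left {r' : ℕ} (G : Matrix (Fin r') (Fin r') ℂ) (u v w : Fin r' → ℂ) :
    qf G (u - v) w = qf G u w - qf G v w := by
  simp [qf, star_sub, sub_dotProduct]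

lemma qf_sub_right {r' : ℕ} (G : Matrix (Fin r') (Fin r') ℂ) (u v w : Fin r' → ℂ) :
    qf G u (v - w) = qf G u v - qf G u w := by
  simp [qf, Matrix.mulVec_sub, dotProduct_sub]

lemma qf_conj {r' : ℕ} (G : Matrix (Fin r') (Fin r') ℂ) (hG : G.IsHermitian)
    (u v : Fin r' → ℂ) : (starRingEnd ℂ) (qf G u v) = qf G v u := by
  have hGi : (G⁻¹).IsHermitian := hG.inv
  simp only [qf, dotProduct, Matrix.mulVec, dotProduct, map_sum, _root_.map_mul,
    Finset.mul_sum, Finset.sum_mul, Pi.star_apply]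
  rw [Finset.sum_comm]
  refine Finset.sum_congr rfl fun l _ => Finset.sum_congr rfl fun k _ => ?_
  have h1 : (starRingEnd ℂ) (G⁻¹ k l) = G⁻¹ l k := hGi.apply l k
  rw [h1]
  simp only [RCLike.star_def, Complex.conj_conj]
  ring

section DetUpdate

variable {r' : ℕ} {ι : Type*} [Fintype ι] [DecidableEq ι]

/-- Rank-one column update determinant formula. -/
lemma det_col_update (A : Matrix (Fin r') ι ℂ) (hG : IsUnit (A * Aᴴ).det)
    (w : Fin r' → ℂ) (j : ι) :
    ((A + Matrix.of fun k m => w k * (if m = j then 1 else 0)) *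
      (A + Matrix.of fun k m => w k * (if m = j then 1 else 0))ᴴ).det
    = (A * Aᴴ).det *
      (1 + qf (A*Aᴴ) w w + qf (A*Aᴴ) w (fun k => A k j) + qf (A*Aᴴ) (fun k => A k j) w
        + qf (A*Aᴴ) w (fun k => A k j) * qf (A*Aᴴ) (fun k => A k j) w
        - qf (A*Aᴴ) w w * qf (A*Aᴴ) (fun k => A k j) (fun k => A k j)) := by
  set G := A * Aᴴ with hGdef
  set a : Fin r' → ℂ := fun k => A k j with ha
  set B : Matrix (Fin r') ι ℂ := A + Matrix.of fun k m => w k * (if m = j then 1 else 0) with hB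
  set U : Matrix (Fin r') (Fin 2) ℂ := Matrix.of fun k s => if s = 0 then a k + w k else w k with hU
  set V : Matrix (Fin 2) (Fin r') ℂ := Matrix.of fun s l => if s = 0 then star (w l) else star (a l) with hV
  have hBB : B * Bᴴ = G + U * V := by
    ext k l
    have key : ∀ x : ι, (A k x + w k * (if x = j then (1:ℂ) else 0)) *
        star (A l x + w l * (if x = j then (1:ℂ) else 0))
        = A k x * star (A l x) + (if x = j then
            (a k * star (w l) + w k * star (a l) + w k * star (w l)) else 0) := by
      intro x
      by_cases h : x = j <;> simp [h, ha, star_add, star_mul'] <;> ring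
    simp only [hB, hU, hV, hGdef, Matrix.mul_apply, Matrix.add_apply, Matrix.of_apply,
      Matrix.conjTranspose_apply, Fin.sum_univ_two]
    rw [Finset.sum_congr rfl (fun x _ => key x), Finset.sum_add_distrib,
      Finset.sum_ite_eq' Finset.univ j]
    simp only [Finset.mem_univ, if_true, Fin.one_eq_zero_iff]
    norm_num
    ring
  have h1 : B * Bᴴ = G * (1 + G⁻¹ * (U * V)) := by
    rw [hBB, Matrix.mul_add, Matrix.mul_one, ← Matrix.mul_assoc, Matrix.mul_nonsing_inv _ hG,
      Matrix.one_mul]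
  rw [h1, Matrix.det_mul]
  congr 1
  rw [← Matrix.mul_assoc, Matrix.det_one_add_mul_comm, Matrix.det_fin_two]
  have entry : ∀ (u v : Fin r' → ℂ),
      (∑ l, star (u l) * ∑ k, G⁻¹ l k * v k) = qf G u v := by
    intro u v
    simp [qf, dotProduct, Matrix.mulVec]
  have e00 : ((1 + V * (G⁻¹ * U)) : Matrix (Fin 2) (Fin 2) ℂ) 0 0 = 1 + (qf G w a + qf G w w) := by
    simp only [Matrix.add_apply, Matrix.one_apply_eq, Matrix.mul_apply, hV, hU,
      Matrix.of_apply, if_true, Matrix.mul_apply]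
    rw [← entry w a, ← entry w w, ← Finset.sum_add_distrib]
    norm_num [Finset.mul_sum, mul_add, Finset.sum_add_distrib]
  have e01 : ((1 + V * (G⁻¹ * U)) : Matrix (Fin 2) (Fin 2) ℂ) 0 1 = qf G w w := by
    simp only [Matrix.add_apply, Matrix.mul_apply, hV, hU, Matrix.of_apply, Matrix.one_apply,
      if_true]
    rw [← entry w w]
    norm_num [Finset.mul_sum]
  have e10 : ((1 + V * (G⁻¹ * U)) : Matrix (Fin 2) (Fin 2) ℂ) 1 0 = qf G a a + qf G a w := by
    simp only [Matrix.add_apply, Matrix.mul_apply, hV, hU, Matrix.of_apply, Matrix.one_apply,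
      if_true]
    rw [← entry a a, ← entry a w, ← Finset.sum_add_distrib]
    norm_num [Finset.mul_sum, mul_add, Finset.sum_add_distrib]
  have e11 : ((1 + V * (G⁻¹ * U)) : Matrix (Fin 2) (Fin 2) ℂ) 1 1 = 1 + qf G a w := by
    simp only [Matrix.add_apply, Matrix.one_apply_eq, Matrix.mul_apply, hV, hU,
      Matrix.of_apply, Matrix.one_apply, if_true]
    rw [← entry a w]
    norm_num [Finset.mul_sum]
  rw [e00, e01, e10, e11]
  ring

end DetUpdate

/-- Bijection between the exchanged index set and the original one. -/
def exchangeEquiv {N : ℕ} (S : Finset (Fin N)) {i j : Fin N} (hi : i ∉ S) (hj : j ∈ S) :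
    {x // x ∈ insert i (S.erase j)} ≃ {x // x ∈ S} where
  toFun m := if h : (m : Fin N) = i then ⟨j, hj⟩ else ⟨m, by
    rcases Finset.mem_insert.mp m.2 with h' | h'
    · exact absurd h' h
    · exact Finset.mem_of_mem_erase h'⟩
  invFun m := if h : (m : Fin N) = j then ⟨i, Finset.mem_insert_self _ _⟩
    else ⟨m, Finset.mem_insert_of_mem (Finset.mem_erase.mpr ⟨h, m.2⟩)⟩
  left_inv := by
    intro m
    by_cases h : (m : Fin N) = i
    · simp only [dif_pos h, dif_pos]
      exact Subtype.ext h.symm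
    · have h2 : (m : Fin N) ≠ j := by
        rcases Finset.mem_insert.mp m.2 with h' | h'
        · exact absurd h' h
        · exact (Finset.mem_erase.mp h').1
      simp only [dif_neg h, dif_neg h2]
  right_inv := by
    intro m
    by_cases h : (m : Fin N) = j
    · simp only [dif_pos h, dif_pos]
      exact Subtype.ext h.symm
    · have h2 : (m : Fin N) ≠ i := fun hh => hi (hh ▸ m.2)
      simp only [dif_neg h, dif_neg h2]

lemma exchangeEquiv_eq_of_eq {N : ℕ} (S : Finset (Fin N)) {i j : Fin N} (hi : i ∉ S) (hj : j ∈ S)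
    (m : {x // x ∈ insert i (S.erase j)}) (h : (m : Fin N) = i) :
    exchangeEquiv S hi hj m = ⟨j, hj⟩ := dif_pos h

lemma exchangeEquiv_eq_of_ne {N : ℕ} (S : Finset (Fin N)) {i j : Fin N} (hi : i ∉ S) (hj : j ∈ S)
    (m : {x // x ∈ insert i (S.erase j)}) (h : (m : Fin N) ≠ i) :
    (exchangeEquiv S hi hj m : Fin N) = (m : Fin N) := by
  have : exchangeEquiv S hi hj m = ⟨m, _⟩ := dif_neg h
  rw [this]

lemma sqVol_exchange {r N : ℕ} (R : Matrix (Fin r) (Fin N) ℂ) (S : Finset (Fin N))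
    {i j : Fin N} (hi : i ∉ S) (hj : j ∈ S) :
    sqVol R (insert i (S.erase j)) =
    (((colsSub R S + Matrix.of fun k (m : {x // x ∈ S}) =>
        (R k i - R k j) * (if m = (⟨j, hj⟩ : {x // x ∈ S}) then 1 else 0)) *
      (colsSub R S + Matrix.of fun k (m : {x // x ∈ S}) =>
        (R k i - R k j) * (if m = (⟨j, hj⟩ : {x // x ∈ S}) then 1 else 0))ᴴ).det).re := by
  classical
  set B := colsSub R S + Matrix.of (fun k (m : {x // x ∈ S}) =>
        (R k i - R k j) * (if m = (⟨j, hj⟩ : {x // x ∈ S}) then 1 else 0)) with hB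
  set e := exchangeEquiv S hi hj with he
  have hcol : colsSub R (insert i (S.erase j)) = B.submatrix id ⇑e := by
    ext k m
    simp only [colsSub, Matrix.submatrix_apply, id]
    by_cases h : (m : Fin N) = i
    · rw [he, exchangeEquiv_eq_of_eq S hi hj m h]
      simp [hB, colsSub, h]
    · have hme : (e m : Fin N) = (m : Fin N) := exchangeEquiv_eq_of_ne S hi hj m h
      have h2 : (m : Fin N) ≠ j := by
        rcases Finset.mem_insert.mp m.2 with h' | h'
        · exact absurd h' h
        · exact (Finset.mem_erase.mp h').1
      have hne : e m ≠ (⟨j, hj⟩ : {x // x ∈ S}) := by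
        intro hh
        exact h2 (by rw [← hme, hh])
      simp [hB, colsSub, hne, hme]
  have hdet : (B.submatrix id ⇑e) * (B.submatrix id ⇑e)ᴴ = B * Bᴴ := by
    ext k l
    simp only [Matrix.mul_apply, Matrix.submatrix_apply, Matrix.conjTranspose_apply, id]
    exact Equiv.sum_comp e (fun m => B k m * star (B l m))
  simp only [sqVol]
  rw [hcol, hdet]

open scoped ComplexOrder in
lemma det_AAH_real {r' : ℕ} {ι : Type*} [Fintype ι] [DecidableEq ι]
    (A : Matrix (Fin r') ι ℂ) :
    ∃ t : ℝ, 0 ≤ t ∧ (A * Aᴴ).det = (t : ℂ) := by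
  have hpsd : (A * Aᴴ).PosSemidef := Matrix.posSemidef_self_mul_conjTranspose A
  have hH : (A * Aᴴ).IsHermitian := hpsd.isHermitian
  refine ⟨∏ k, hH.eigenvalues k,
    Finset.prod_nonneg fun k _ => hpsd.eigenvalues_nonneg k, ?_⟩
  rw [hH.det_eq_prod_eigenvalues]
  push_cast
  rfl

lemma norm_c_bound {r n N : ℕ} (R : Matrix (Fin r) (Fin N) ℂ)
    (S : Finset (Fin N)) (hS : S.card = n) (hvol : sqVol R S ≠ 0)
    (hloc : ∀ j ∈ S, ∀ i ∉ S, sqVol R (insert i (S.erase j)) ≤ sqVol R S)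
    {i : Fin N} (hi : i ∉ S) :
    (∑ j : {x // x ∈ S}, Complex.normSq
      ((((colsSub R S)ᴴ * (colsSub R S * (colsSub R S)ᴴ)⁻¹) *ᵥ (fun k => R k i)) j))
      * ((n:ℝ) - (r:ℝ) + 1) ≤ (r:ℝ) := by
  classical
  set Ah := colsSub R S with hAh
  set G := Ah * Ahᴴ with hGdef
  obtain ⟨t, ht0, hdet⟩ := det_AAH_real Ah
  have hvolt : sqVol R S = t := by
    rw [sqVol, ← hAh, ← hGdef, hdet, Complex.ofReal_re]
  have htpos : 0 < t := lt_of_le_of_ne ht0 fun h => hvol (by rw [hvolt, ← h])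
  have hGu : IsUnit G.det := by
    rw [hdet, isUnit_iff_ne_zero]
    exact_mod_cast htpos.ne'
  have hH : G.IsHermitian := Matrix.isHermitian_mul_conjTranspose_self Ah
  set ri : Fin r → ℂ := fun k => R k i with hri
  set c : {x // x ∈ S} → ℂ := (Ahᴴ * G⁻¹) *ᵥ ri with hc
  set τ : ℂ := qf G ri ri with hτ
  set a : {x // x ∈ S} → (Fin r → ℂ) := fun j => (fun k => Ah k j) with haa
  -- c j = qf G (a j) ri
  have hcj : ∀ j : {x // x ∈ S}, c j = qf G (a j) ri := by
    intro j
    simp only [hc, haa, qf, Matrix.mulVec, dotProduct, Matrix.mul_apply,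
      Matrix.conjTranspose_apply, Pi.star_apply, Finset.sum_mul, Finset.mul_sum]
    rw [Finset.sum_comm]
    exact Finset.sum_congr rfl fun l _ => Finset.sum_congr rfl fun k _ => by ring
  -- τ = ∑ normSq (c j)
  have hMM : (Ahᴴ * G⁻¹)ᴴ * (Ahᴴ * G⁻¹) = G⁻¹ := by
    rw [Matrix.conjTranspose_mul, Matrix.conjTranspose_conjTranspose, hH.inv.eq]
    calc G⁻¹ * Ah * (Ahᴴ * G⁻¹) = G⁻¹ * (Ah * Ahᴴ * G⁻¹) := by
          rw [Matrix.mul_assoc, Matrix.mul_assoc]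
      _ = G⁻¹ * (G * G⁻¹) := by rw [← hGdef]
      _ = G⁻¹ := by rw [Matrix.mul_nonsing_inv _ hGu, Matrix.mul_one]
  have hτc : τ = star c ⬝ᵥ c := by
    rw [hc, Matrix.star_mulVec, ← Matrix.dotProduct_mulVec, Matrix.mulVec_mulVec, hMM]
    rfl
  have hτre : τ = ((∑ j, Complex.normSq (c j) : ℝ) : ℂ) := by
    rw [hτc]
    push_cast
    simp only [dotProduct, Pi.star_apply]
    exact Finset.sum_congr rfl fun j _ => by
      rw [mul_comm, show star (c j) = (starRingEnd ℂ) (c j) from rfl, Complex.mul_conj]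
  -- trace identity : ∑ p j = r
  have hptr : (∑ j : {x // x ∈ S}, qf G (a j) (a j)) = (r : ℂ) := by
    have hdiag : ∀ j : {x // x ∈ S}, qf G (a j) (a j) = (Ahᴴ * G⁻¹ * Ah) j j := by
      intro j
      simp only [haa, qf, Matrix.mulVec, dotProduct, Matrix.mul_apply,
        Matrix.conjTranspose_apply, Pi.star_apply, Finset.sum_mul, Finset.mul_sum]
      rw [Finset.sum_comm]
      exact Finset.sum_congr rfl fun l _ => Finset.sum_congr rfl fun k _ => by ring
    rw [Finset.sum_congr rfl fun j _ => hdiag j]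
    have : (∑ j : {x // x ∈ S}, (Ahᴴ * G⁻¹ * Ah) j j) = (Ahᴴ * G⁻¹ * Ah).trace := rfl
    rw [this, Matrix.trace_mul_comm, ← Matrix.mul_assoc, ← hGdef,
      Matrix.mul_nonsing_inv _ hGu, Matrix.trace_one]
    simp
  -- the per-column inequality
  have hXj : ∀ j : {x // x ∈ S},
      1 - (qf G (a j) (a j)).re + Complex.normSq (c j)
        + τ.re * (1 - (qf G (a j) (a j)).re) ≤ 1 := by
    intro j
    have hx := hloc (↑j) j.2 i hi
    rw [sqVol_exchange R S hi j.2] at hx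
    simp only [Subtype.coe_eta] at hx
    have hupd : (Matrix.of fun k (m : {x // x ∈ S}) =>
        (R k i - R k ↑j) * (if m = j then (1:ℂ) else 0)) =
        (Matrix.of fun k (m : {x // x ∈ S}) =>
        ((ri - a j) k) * (if m = j then (1:ℂ) else 0)) := rfl
    rw [hupd, ← hAh, det_col_update Ah hGu (ri - a j) j] at hx
    have hDsimp : (1 + qf G (ri - a j) (ri - a j) + qf G (ri - a j) (fun k => Ah k j)
        + qf G (fun k => Ah k j) (ri - a j)
        + qf G (ri - a j) (fun k => Ah k j) * qf G (fun k => Ah k j) (ri - a j)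
        - qf G (ri - a j) (ri - a j) * qf G (fun k => Ah k j) (fun k => Ah k j))
        = 1 - qf G (a j) (a j) + qf G ri (a j) * qf G (a j) ri
          + τ * (1 - qf G (a j) (a j)) := by
      have h1 : (fun k => Ah k j) = a j := rfl
      have h2 : qf G (ri - a j) (ri - a j)
          = qf G ri ri - qf G ri (a j) - qf G (a j) ri + qf G (a j) (a j) := by
        rw [qf_sub_left, qf_sub_right, qf_sub_right]; ring
      have h3 : qf G (ri - a j) (a j) = qf G ri (a j) - qf G (a j) (a j) :=
        qf_sub_left G ri (a j) (a j)
      have h4 : qf G (a j) (ri - a j) = qf G (a j) ri - qf G (a j) (a j) :=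
        qf_sub_right G (a j) ri (a j)
      rw [h1, h2, h3, h4, hτ]
      ring
    rw [← hGdef, hDsimp] at hx
    -- realness
    have hp : ((qf G (a j) (a j)).re : ℂ) = qf G (a j) (a j) :=
      Complex.conj_eq_iff_re.mp (qf_conj G hH (a j) (a j))
    have hτr : ((τ.re : ℝ) : ℂ) = τ := by rw [hτre]; simp
    have hβ : qf G ri (a j) = (starRingEnd ℂ) (qf G (a j) ri) := (qf_conj G hH (a j) ri).symm
    have hβn : qf G ri (a j) * qf G (a j) ri = ((Complex.normSq (c j) : ℝ) : ℂ) := by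
      rw [hβ, ← hcj j, mul_comm, Complex.mul_conj]
    have hcast : (1 - qf G (a j) (a j) + qf G ri (a j) * qf G (a j) ri
        + τ * (1 - qf G (a j) (a j)))
        = (((1 - (qf G (a j) (a j)).re + Complex.normSq (c j)
            + τ.re * (1 - (qf G (a j) (a j)).re) : ℝ)) : ℂ) := by
      conv_lhs => rw [← hp, ← hτr, hβn]
      push_cast
      ring
    rw [hcast, hdet, hvolt, ← Complex.ofReal_mul, Complex.ofReal_re] at hx
    nlinarith [hx, htpos]
  -- sum up
  have hsum := Finset.sum_le_sum (fun j (_ : j ∈ (Finset.univ : Finset {x // x ∈ S})) => hXj j)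
  have hpre : (∑ j : {x // x ∈ S}, (qf G (a j) (a j)).re) = (r : ℝ) := by
    have := congrArg Complex.re hptr
    rwa [Complex.re_sum] at this
  have hnσ : (∑ j : {x // x ∈ S}, Complex.normSq (c j)) = τ.re := by
    rw [hτre]; simp
  have hone : (∑ _j : {x // x ∈ S}, (1:ℝ)) = (n:ℝ) := by
    simp [Finset.card_univ, Fintype.card_coe, hS]
  have hexp : (∑ j : {x // x ∈ S}, (1 - (qf G (a j) (a j)).re + Complex.normSq (c j)
      + τ.re * (1 - (qf G (a j) (a j)).re)))
      = (n:ℝ) - r + τ.re + τ.re * ((n:ℝ) - r) := by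
    simp only [Finset.sum_add_distrib, Finset.sum_sub_distrib, ← Finset.mul_sum,
      Finset.sum_const, Finset.card_univ, Fintype.card_coe, hS, nsmul_eq_mul, mul_one,
      hpre, hnσ]
  rw [hexp, hone] at hsum
  rw [hnσ]
  nlinarith [hsum]

lemma normSq_eq_norm_sq (z : ℂ) : Complex.normSq z = ‖z‖^2 := by
  rw [← Complex.sq_norm]

set_option maxHeartbeats 1000000 in
/-- If `R` has full row rank and `Â = R_{:,S}` is an `r × n` column submatrix of nonzero
volume with locally maximal volume under single-column exchanges, then for every `x ∈ ℂ^N`,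
`‖Â⁺ (R x)‖₂² ≤ (1 + r(N−n)/(n−r+1))·‖x‖₂²`, where `Â⁺ = Âᴴ(Â Âᴴ)⁻¹`; equivalently,
`‖Â⁺ R‖₂ ≤ √(1 + r(N−n)/(n−r+1))`. -/
theorem statement13 (r n N : ℕ) (hrn : r ≤ n) (hnN : n ≤ N)
    (R : Matrix (Fin r) (Fin N) ℂ) (hR : IsUnit (R * Rᴴ).det)
    (S : Finset (Fin N)) (hS : S.card = n)
    (hvol : sqVol R S ≠ 0)
    (hloc : ∀ j ∈ S, ∀ i ∉ S, sqVol R (insert i (S.erase j)) ≤ sqVol R S) :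
    ∀ x : Fin N → ℂ,
      (∑ j, ‖(((colsSub R S)ᴴ * (colsSub R S * (colsSub R S)ᴴ)⁻¹) *ᵥ (R *ᵥ x)) j‖ ^ 2)
        ≤ (1 + (r : ℝ) * ((N : ℝ) - (n : ℝ)) / ((n : ℝ) - (r : ℝ) + 1))
            * ∑ i, ‖x i‖ ^ 2 := by
  intro x
  classical
  have hrn' : (r:ℝ) ≤ (n:ℝ) := by exact_mod_cast hrn
  have hnN' : (n:ℝ) ≤ (N:ℝ) := by exact_mod_cast hnN
  have hden : (0:ℝ) < (n:ℝ) - (r:ℝ) + 1 := by linarith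
  set Ah := colsSub R S with hAh
  set G := Ah * Ahᴴ with hGdef
  obtain ⟨t, ht0, hdet⟩ := det_AAH_real Ah
  have hvolt : sqVol R S = t := by rw [sqVol, ← hAh, ← hGdef, hdet, Complex.ofReal_re]
  have htpos : 0 < t := lt_of_le_of_ne ht0 fun h => hvol (by rw [hvolt, ← h])
  have hGu : IsUnit G.det := by
    rw [hdet, isUnit_iff_ne_zero]
    exact_mod_cast htpos.ne'
  have hH : G.IsHermitian := Matrix.isHermitian_mul_conjTranspose_self Ah
  set T := Ahᴴ * G⁻¹ with hT
  set y : {v // v ∈ S} → ℂ := T *ᵥ (R *ᵥ x) with hy0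
  set xS : {v // v ∈ S} → ℂ := fun j => x ↑j with hxS
  set u : {v // v ∈ S} → ℂ := (T * Ah) *ᵥ xS with hu0
  set cc : Fin N → {v // v ∈ S} → ℂ := fun i => T *ᵥ (fun k => R k i) with hcc
  set z : {v // v ∈ S} → ℂ := fun jj => ∑ i ∈ Sᶜ, x i * cc i jj with hz0
  -- decomposition y = u + z
  have hy : y = fun jj => u jj + z jj := by
    funext jj
    have h1 : y jj = ∑ m : Fin N, (∑ k, T jj k * R k m) * x m := by
      simp only [hy0, Matrix.mulVec, dotProduct, Finset.mul_sum, Finset.sum_mul]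
      rw [Finset.sum_comm]
      exact Finset.sum_congr rfl fun m _ => Finset.sum_congr rfl fun k _ => by ring
    have h2 : (∑ m ∈ S, (∑ k, T jj k * R k m) * x m) = u jj := by
      rw [← Finset.sum_attach S (fun m => (∑ k, T jj k * R k m) * x m)]
      simp only [hu0, Matrix.mulVec, dotProduct, Matrix.mul_apply]
      rfl
    have h3 : (∑ m ∈ Sᶜ, (∑ k, T jj k * R k m) * x m) = z jj := by
      rw [hz0]
      exact Finset.sum_congr rfl fun m _ => by
        simp only [hcc, Matrix.mulVec, dotProduct]
        ring
    rw [h1, ← Finset.sum_add_sum_compl S, h2, h3]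
  -- projection facts
  have hPherm : (T * Ah)ᴴ = T * Ah := by
    calc (T * Ah)ᴴ = Ahᴴ * (Ahᴴ * G⁻¹)ᴴ := by rw [hT, Matrix.conjTranspose_mul]
      _ = Ahᴴ * ((G⁻¹)ᴴ * Ah) := by
          rw [Matrix.conjTranspose_mul, Matrix.conjTranspose_conjTranspose]
      _ = Ahᴴ * (G⁻¹ * Ah) := by rw [hH.inv.eq]
      _ = T * Ah := by rw [hT, Matrix.mul_assoc]
  have hPP : (T * Ah) * (T * Ah) = T * Ah := by
    rw [hT]
    simp only [Matrix.mul_assoc]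
    rw [show Ah * (Ahᴴ * (G⁻¹ * Ah)) = G * (G⁻¹ * Ah) from by
        rw [← Matrix.mul_assoc, ← hGdef],
      ← Matrix.mul_assoc G, Matrix.mul_nonsing_inv _ hGu, Matrix.one_mul]
  have hQ : star u ⬝ᵥ u = star xS ⬝ᵥ ((T * Ah) *ᵥ xS) := by
    rw [hu0, Matrix.star_mulVec, ← Matrix.dotProduct_mulVec, Matrix.mulVec_mulVec,
      hPherm, hPP]
  have hu2 : (∑ j, ‖u j‖^2) ≤ ∑ j, ‖xS j‖^2 := by
    have h1 : (∑ j, ‖u j‖^2) = (star u ⬝ᵥ u).re := by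
      rw [dotProduct, Complex.re_sum]
      refine Finset.sum_congr rfl fun j _ => ?_
      rw [Pi.star_apply, mul_comm, show star (u j) = (starRingEnd ℂ) (u j) from rfl,
        Complex.mul_conj, Complex.ofReal_re, normSq_eq_norm_sq]
    have h2 : (star u ⬝ᵥ u).re ≤ ∑ j, ‖xS j‖ * ‖u j‖ := by
      rw [hQ, ← hu0, dotProduct, Complex.re_sum]
      refine Finset.sum_le_sum fun j _ => ?_
      refine (Complex.re_le_norm _).trans ?_
      rw [Pi.star_apply, norm_mul, norm_star]
    have h3 : (∑ j, ‖xS j‖ * ‖u j‖)^2 ≤ (∑ j, ‖xS j‖^2) * (∑ j, ‖u j‖^2) :=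
      Finset.sum_mul_sq_le_sq_mul_sq _ _ _
    have hsu0 : (0:ℝ) ≤ ∑ j, ‖u j‖^2 := Finset.sum_nonneg fun j _ => sq_nonneg _
    rcases eq_or_lt_of_le hsu0 with h | h
    · rw [← h]
      exact Finset.sum_nonneg fun j _ => sq_nonneg _
    · have hle : (∑ j, ‖u j‖^2) ≤ ∑ j, ‖xS j‖ * ‖u j‖ := h1 ▸ h2
      nlinarith [hle, h3, h]
  -- bound on the compl columns
  have hK1 : ∀ i, i ∉ S → (∑ j, Complex.normSq (cc i j)) * ((n:ℝ) - (r:ℝ) + 1) ≤ (r:ℝ) :=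
    fun i hi => norm_c_bound R S hS hvol hloc hi
  have hσ : ∀ i, i ∉ S → (∑ j, ‖cc i j‖^2) ≤ (r:ℝ)/((n:ℝ)-(r:ℝ)+1) := by
    intro i hi
    rw [le_div_iff₀ hden]
    have := hK1 i hi
    simpa only [normSq_eq_norm_sq] using this
  -- euclidean space packaging
  set le2 := (WithLp.linearEquiv 2 ℂ ({v // v ∈ S} → ℂ)).symm with hle2
  have hnorm : ∀ v : {v // v ∈ S} → ℂ, ‖le2 v‖ = Real.sqrt (∑ j, ‖v j‖^2) := by
    intro v
    rw [EuclideanSpace.norm_eq]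
    congr 1
  have hYUZ : y = u + z := by
    funext jj
    rw [congrFun hy jj]
    rfl
  -- z bound
  have hZbd : ‖le2 z‖ ≤ ∑ i ∈ Sᶜ, ‖x i‖ * Real.sqrt (∑ j, ‖cc i j‖^2) := by
    have hzs : z = ∑ i ∈ Sᶜ, (fun jj => x i * cc i jj) := by
      funext jj
      rw [hz0]
      rw [Finset.sum_apply]
    rw [hzs, map_sum]
    refine (norm_sum_le _ _).trans (Finset.sum_le_sum fun i _ => ?_)
    rw [hnorm]
    have : (∑ j, ‖x i * cc i j‖^2) = ‖x i‖^2 * ∑ j, ‖cc i j‖^2 := by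
      rw [Finset.mul_sum]
      exact Finset.sum_congr rfl fun j _ => by rw [norm_mul, mul_pow]
    rw [this, Real.sqrt_mul (sq_nonneg _), Real.sqrt_sq (norm_nonneg _)]
  -- abbreviations
  set X : ℝ := ∑ m ∈ S, ‖x m‖^2 with hX
  set Xc : ℝ := ∑ m ∈ Sᶜ, ‖x m‖^2 with hXc
  set K : ℝ := ((N:ℝ) - (n:ℝ)) * ((r:ℝ)/((n:ℝ)-(r:ℝ)+1)) with hK
  have hXnn : 0 ≤ X := Finset.sum_nonneg fun m _ => sq_nonneg _
  have hXcnn : 0 ≤ Xc := Finset.sum_nonneg fun m _ => sq_nonneg _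
  have hKnn : 0 ≤ K := by
    apply mul_nonneg (by linarith) (div_nonneg (Nat.cast_nonneg r) (le_of_lt hden))
  -- sum over compl of sigma
  have hσsum : (∑ i ∈ Sᶜ, ∑ j, ‖cc i j‖^2) ≤ ((N:ℝ) - (n:ℝ)) * ((r:ℝ)/((n:ℝ)-(r:ℝ)+1)) := by
    have hcard : ((Sᶜ.card : ℕ) : ℝ) = (N:ℝ) - (n:ℝ) := by
      rw [Finset.card_compl, hS, Fintype.card_fin, Nat.cast_sub hnN]
    calc (∑ i ∈ Sᶜ, ∑ j, ‖cc i j‖^2) ≤ ∑ i ∈ Sᶜ, (r:ℝ)/((n:ℝ)-(r:ℝ)+1) :=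
          Finset.sum_le_sum fun i hi => hσ i (Finset.mem_compl.mp hi)
      _ = ((Sᶜ.card : ℕ) : ℝ) * ((r:ℝ)/((n:ℝ)-(r:ℝ)+1)) := by
          rw [Finset.sum_const, nsmul_eq_mul]
      _ = ((N:ℝ) - (n:ℝ)) * ((r:ℝ)/((n:ℝ)-(r:ℝ)+1)) := by rw [hcard]
  have hZsq : ‖le2 z‖^2 ≤ Xc * K := by
    have hL : (∑ i ∈ Sᶜ, ‖x i‖ * Real.sqrt (∑ j, ‖cc i j‖^2))^2 ≤ Xc * K := by
      refine (Finset.sum_mul_sq_le_sq_mul_sq Sᶜ _ _).trans ?_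
      rw [hXc, hK]
      have : (∑ i ∈ Sᶜ, (Real.sqrt (∑ j, ‖cc i j‖^2))^2) = ∑ i ∈ Sᶜ, ∑ j, ‖cc i j‖^2 :=
        Finset.sum_congr rfl fun i _ =>
          Real.sq_sqrt (Finset.sum_nonneg fun j _ => sq_nonneg _)
      rw [this]
      exact mul_le_mul_of_nonneg_left hσsum hXcnn
    have h0 : (0:ℝ) ≤ ∑ i ∈ Sᶜ, ‖x i‖ * Real.sqrt (∑ j, ‖cc i j‖^2) :=
      Finset.sum_nonneg fun i _ => mul_nonneg (norm_nonneg _) (Real.sqrt_nonneg _)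
    calc ‖le2 z‖^2 ≤ (∑ i ∈ Sᶜ, ‖x i‖ * Real.sqrt (∑ j, ‖cc i j‖^2))^2 := by
          have := pow_le_pow_left₀ (norm_nonneg (le2 z)) hZbd 2
          simpa using this
      _ ≤ Xc * K := hL
  have hUsq : ‖le2 u‖^2 ≤ X := by
    rw [hnorm, Real.sq_sqrt (Finset.sum_nonneg fun j _ => sq_nonneg _)]
    refine hu2.trans (le_of_eq ?_)
    rw [hX, ← Finset.sum_attach S (fun m => ‖x m‖^2)]
    rfl
  -- final combination
  have hYsum : (∑ j, ‖y j‖^2) = ‖le2 y‖^2 := by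
    rw [hnorm, Real.sq_sqrt (Finset.sum_nonneg fun j _ => sq_nonneg _)]
  have hYle : ‖le2 y‖ ≤ ‖le2 u‖ + ‖le2 z‖ := by
    rw [hYUZ, map_add]
    exact norm_add_le _ _
  have hXsplit : X + Xc = ∑ i, ‖x i‖^2 := Finset.sum_add_sum_compl S _
  have hKeq : (1 + (r : ℝ) * ((N : ℝ) - (n : ℝ)) / ((n : ℝ) - (r : ℝ) + 1)) = 1 + K := by
    rw [hK]
    ring
  rw [hYsum, ← hXsplit, hKeq]
  set A := ‖le2 u‖ with hA
  set B := ‖le2 z‖ with hB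
  have hAnn : 0 ≤ A := norm_nonneg _
  have hBnn : 0 ≤ B := norm_nonneg _
  have hYB : ‖le2 y‖^2 ≤ (A+B)^2 := by
    have := pow_le_pow_left₀ (norm_nonneg (le2 y)) hYle 2
    simpa using this
  refine hYB.trans ?_
  -- (A+B)^2 ≤ (1+K)*(X+Xc)
  have hsK : Real.sqrt K ^ 2 = K := Real.sq_sqrt hKnn
  have hsXc : Real.sqrt Xc ^ 2 = Xc := Real.sq_sqrt hXcnn
  have hBle : B ≤ Real.sqrt K * Real.sqrt Xc := by
    rw [← Real.sqrt_mul hKnn]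
    have : B = Real.sqrt (B^2) := (Real.sqrt_sq hBnn).symm
    rw [this]
    apply Real.sqrt_le_sqrt
    exact hZsq.trans (le_of_eq (mul_comm _ _))
  clear_value A B X Xc K
  nlinarith [hUsq, hZsq, hBle, hsK, hsXc, hAnn, hBnn, Real.sqrt_nonneg K,
    Real.sqrt_nonneg Xc, sq_nonneg (Real.sqrt K * A - Real.sqrt Xc),
    mul_le_mul_of_nonneg_left hUsq (sq_nonneg (Real.sqrt K)),
    mul_le_mul_of_nonneg_left hBle (mul_nonneg (by norm_num : (0:ℝ) ≤ 2) hAnn)]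
end
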